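/- Let n > 1 be an odd integer, let ℓ ≥ 0 be an integer, and set α = 2^{−ℓ}. Then the set { (i/n) mod α : i = 0, 1, …, n−1 } equals the set { α·i/n : i = 0, 1, …, n−1 }, where for real numbers x ≥ 0 and y > 0, x mod y denotes x − y·⌊x/y⌋. -/

import Mathlib

/-- `x mod y = x − y·⌊x/y⌋` for real numbers. -/
noncomputable def rmod (x y : ℝ) : ℝ := x - y * ⌊x / y⌋

lemma floor_nat_div (m n : ℕ) : ⌊(m : ℝ) / n⌋ = (m / n : ℕ) := by
  rw [show ((m:ℝ)/n) = ((m/n : ℚ) : ℝ) by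
    rw [Rat.cast_div, Rat.cast_natCast, Rat.cast_natCast], Rat.floor_cast,
    Rat.floor_natCast_div_natCast]
  exact (Int.natCast_div _ _).symm

lemma rmod_key (n : ℕ) (hn : 0 < n) (ℓ i : ℕ) :
    rmod ((i : ℝ) / n) ((2 : ℝ) ^ (-(ℓ : ℤ))) =
      (2 : ℝ) ^ (-(ℓ : ℤ)) * ((2 ^ ℓ * i % n : ℕ) : ℝ) / n := by
  have hα : (2 : ℝ) ^ (-(ℓ : ℤ)) = ((2:ℝ)^ℓ)⁻¹ := by
    rw [zpow_neg, zpow_natCast]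
  have h2 : (0:ℝ) < (2:ℝ)^ℓ := by positivity
  have hn' : (n:ℝ) ≠ 0 := Nat.cast_ne_zero.mpr hn.ne'
  have hdiv : ((i : ℝ) / n) / ((2 : ℝ) ^ (-(ℓ : ℤ))) = ((2^ℓ * i : ℕ) : ℝ) / n := by
    rw [hα]
    push_cast
    field_simp
  have hm := Nat.mod_add_div (2^ℓ * i) n
  have hmr : ((2^ℓ*i % n : ℕ) : ℝ) + n * ((2^ℓ*i/n : ℕ) : ℝ) = 2^ℓ * i := by
    exact_mod_cast congrArg (Nat.cast : ℕ → ℝ) hm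
  have hfloor : ((⌊((i:ℝ)/n)/((2:ℝ)^(-(ℓ:ℤ)))⌋ : ℤ) : ℝ) = ((2^ℓ*i/n : ℕ) : ℝ) := by
    rw [hdiv, floor_nat_div]; norm_cast
  rw [rmod, hfloor, hα]
  generalize hb : ((2^ℓ*i % n : ℕ) : ℝ) = b at *
  generalize ha : ((2^ℓ*i/n : ℕ) : ℝ) = a at *
  field_simp
  linear_combination (-1 : ℝ) * hmr

/-- for odd `n > 1` and `α = 2^{-ℓ}`, the set `{(i/n) mod α : 0 ≤ i < n}`
equals the set `{α·i/n : 0 ≤ i < n}`. -/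
theorem shift_set_mod_pow_two (n : ℕ) (hn : 1 < n) (hodd : Odd n) (ℓ : ℕ) :
    {x : ℝ | ∃ i : ℕ, i < n ∧ x = rmod ((i : ℝ) / n) ((2 : ℝ) ^ (-(ℓ : ℤ)))} =
      {x : ℝ | ∃ i : ℕ, i < n ∧ x = (2 : ℝ) ^ (-(ℓ : ℤ)) * i / n} := by
  have hn0 : 0 < n := by omega
  have hcop : Nat.Coprime (2^ℓ) n := (Nat.coprime_two_left.mpr hodd).pow_left ℓ
  haveI : NeZero n := ⟨hn0.ne'⟩
  ext x
  simp only [Set.mem_setOf_eq]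
  constructor
  · rintro ⟨i, hi, rfl⟩
    exact ⟨2^ℓ * i % n, Nat.mod_lt _ hn0, rmod_key n hn0 ℓ i⟩
  · rintro ⟨j, hj, rfl⟩
    set u : (ZMod n)ˣ := ZMod.unitOfCoprime (2^ℓ) hcop
    set i : ℕ := ((u⁻¹ : (ZMod n)ˣ) * (j : ZMod n) : ZMod n).val with hi_def
    refine ⟨i, ZMod.val_lt _, ?_⟩
    have key : (2^ℓ * i) % n = j := by
      have : ((2^ℓ * i : ℕ) : ZMod n) = (j : ZMod n) := by
        push_cast [hi_def, ZMod.natCast_val, ZMod.cast_id]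
        have hu : ((u : (ZMod n)ˣ) : ZMod n) = (2^ℓ : ℕ) := rfl
        push_cast at hu
        rw [← hu, ← mul_assoc, Units.mul_inv, one_mul]
      have := congrArg ZMod.val this
      rwa [ZMod.val_natCast, ZMod.val_natCast, Nat.mod_eq_of_lt hj] at this
    rw [rmod_key n hn0 ℓ i, key]
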